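/- Let Ω be a bounded convex open set, φ ∈ C¹(Ω) convex, u ∈ C(Ω), T x = Ax + b invertible affine, and define ũ(y) = u(T⁻¹ y), φ̃(y) = c[φ(T⁻¹y) − ℓ(T⁻¹y)] (ℓ affine, c > 0) on T(Ω). Then for every β > 0, G_β(ũ, T(Ω)) = T(G_{βc}(u, Ω)), where the G-sets are taken with respect to the quasi-distances of φ̃ and φ respectively. -/

import Mathlib

open scoped RealInnerProductSpace
open Bornology
noncomputable section

open scoped RealInnerProductSpace
open Bornology
noncomputable section

lemma inner_grad {n : ℕ} (f : EuclideanSpace ℝ (Fin n) → ℝ) (x v : EuclideanSpace ℝ (Fin n)) :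
    ⟪gradient f x, v⟫ = fderiv ℝ f x v := by
  simp [gradient, InnerProductSpace.toDual_symm_apply]

lemma aux_S_deriv {n : ℕ} (A : EuclideanSpace ℝ (Fin n) ≃L[ℝ] EuclideanSpace ℝ (Fin n))
    (b y : EuclideanSpace ℝ (Fin n)) :
    HasFDerivAt (fun y => A.symm (y - b)) (A.symm : EuclideanSpace ℝ (Fin n) →L[ℝ] EuclideanSpace ℝ (Fin n)) y := by
  have h1 : HasFDerivAt (fun y : EuclideanSpace ℝ (Fin n) => y - b)
      (ContinuousLinearMap.id ℝ _) y := (hasFDerivAt_id y).sub_const b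
  have h2 := (A.symm.hasFDerivAt (x := y - b)).comp y h1
  exact h2

lemma aux_diff_iff {n : ℕ} (A : EuclideanSpace ℝ (Fin n) ≃L[ℝ] EuclideanSpace ℝ (Fin n))
    (b x0 : EuclideanSpace ℝ (Fin n)) (u ut : EuclideanSpace ℝ (Fin n) → ℝ)
    (hut : ∀ y, ut y = u (A.symm (y - b))) :
    DifferentiableAt ℝ ut (A x0 + b) ↔ DifferentiableAt ℝ u x0 := by
  constructor
  · intro h
    have hu : u = fun x => ut (A x + b) := by
      funext x; rw [hut]; simp
    rw [hu]
    exact h.comp x0 (((A : EuclideanSpace ℝ (Fin n) →L[ℝ] EuclideanSpace ℝ (Fin n)).differentiable.differentiableAt).add_const b)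
  · intro h
    have hu2 : ut = fun y => u (A.symm (y - b)) := funext hut
    rw [hu2]
    have hS := (aux_S_deriv A b (A x0 + b)).differentiableAt
    have : DifferentiableAt ℝ u (A.symm (A x0 + b - b)) := by simpa using h
    exact this.comp (A x0 + b) hS

lemma aux_fderiv_ut {n : ℕ} (A : EuclideanSpace ℝ (Fin n) ≃L[ℝ] EuclideanSpace ℝ (Fin n))
    (b x0 : EuclideanSpace ℝ (Fin n)) (u ut : EuclideanSpace ℝ (Fin n) → ℝ)
    (hut : ∀ y, ut y = u (A.symm (y - b)))
    (hud : DifferentiableAt ℝ u x0) (v : EuclideanSpace ℝ (Fin n)) :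
    fderiv ℝ ut (A x0 + b) v = fderiv ℝ u x0 (A.symm v) := by
  have hS := aux_S_deriv A b (A x0 + b)
  have hu' : HasFDerivAt u (fderiv ℝ u x0) (A.symm (A x0 + b - b)) := by
    simpa using hud.hasFDerivAt
  have hcomp := hu'.comp (A x0 + b) hS
  simp only [Function.comp_def] at hcomp
  have heq : (fun y => u (A.symm (y - b))) = ut := (funext hut).symm
  rw [heq] at hcomp
  rw [hcomp.fderiv]; rfl

lemma aux_fderiv_φt {n : ℕ} (A : EuclideanSpace ℝ (Fin n) ≃L[ℝ] EuclideanSpace ℝ (Fin n))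
    (b p x0 : EuclideanSpace ℝ (Fin n)) (r c : ℝ) (φ φt : EuclideanSpace ℝ (Fin n) → ℝ)
    (hφt : ∀ y, φt y = c * (φ (A.symm (y - b)) - (⟪p, A.symm (y - b)⟫ + r)))
    (hφd : DifferentiableAt ℝ φ x0) (v : EuclideanSpace ℝ (Fin n)) :
    fderiv ℝ φt (A x0 + b) (A v) = c * (fderiv ℝ φ x0 v - ⟪p, v⟫) := by
  have hS := aux_S_deriv A b (A x0 + b)
  have hφ' : HasFDerivAt φ (fderiv ℝ φ x0) (A.symm (A x0 + b - b)) := by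
    simpa using hφd.hasFDerivAt
  have h1 : HasFDerivAt (fun y => φ (A.symm (y - b)))
      ((fderiv ℝ φ x0).comp (A.symm : EuclideanSpace ℝ (Fin n) →L[ℝ] EuclideanSpace ℝ (Fin n)))
      (A x0 + b) := by
    have := hφ'.comp (A x0 + b) hS
    simpa [Function.comp_def] using this
  have h2 : HasFDerivAt (fun y => ⟪p, A.symm (y - b)⟫ + r)
      ((innerSL ℝ p).comp (A.symm : EuclideanSpace ℝ (Fin n) →L[ℝ] EuclideanSpace ℝ (Fin n)))
      (A x0 + b) := by
    have := (((innerSL ℝ p).hasFDerivAt (x := A.symm (A x0 + b - b))).comp (A x0 + b) hS).add_const r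
    simpa [Function.comp_def] using this
  have h3 := ((h1.sub h2).const_mul c)
  have heq : (fun y => c * (φ (A.symm (y - b)) - (⟪p, A.symm (y - b)⟫ + r))) = φt :=
    (funext hφt).symm
  simp only [Pi.sub_apply] at h3
  rw [heq] at h3
  rw [h3.fderiv]
  simp [smul_eq_mul]


/-- Quasi-distance squared induced by a C¹ convex function ψ. -/
def dsq {n : ℕ} (ψ : EuclideanSpace ℝ (Fin n) → ℝ)
    (x x₀ : EuclideanSpace ℝ (Fin n)) : ℝ :=
  ψ x - ψ x₀ - ⟪gradient ψ x₀, x - x₀⟫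

/-- `Gset U ψ w M`: points of U where w is differentiable and touched above and below
by ±M d_ψ(·,x̄)². -/
def Gset {n : ℕ} (U : Set (EuclideanSpace ℝ (Fin n)))
    (ψ w : EuclideanSpace ℝ (Fin n) → ℝ) (M : ℝ) : Set (EuclideanSpace ℝ (Fin n)) :=
  {xb | xb ∈ U ∧ DifferentiableAt ℝ w xb ∧
    ∀ x ∈ U, |w x - w xb - ⟪gradient w xb, x - xb⟫| ≤ M * dsq ψ x xb}

/-- covariance of the G-sets under affine change of variables:
G_β(ũ, T(Ω)) = T(G_{βc}(u, Ω)), where ũ = u ∘ T⁻¹ and φ̃ = c(φ − ℓ) ∘ T⁻¹. -/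
theorem stmt12 {n : ℕ} (Ω : Set (EuclideanSpace ℝ (Fin n)))
    (hΩconv : Convex ℝ Ω) (hΩbdd : IsBounded Ω) (hΩopen : IsOpen Ω)
    (φ : EuclideanSpace ℝ (Fin n) → ℝ) (hφ : ConvexOn ℝ Ω φ)
    (hφd : ∀ x ∈ Ω, DifferentiableAt ℝ φ x)
    (u : EuclideanSpace ℝ (Fin n) → ℝ) (hu : ContinuousOn u Ω)
    (A : EuclideanSpace ℝ (Fin n) ≃L[ℝ] EuclideanSpace ℝ (Fin n))
    (b : EuclideanSpace ℝ (Fin n)) (c : ℝ) (hc : 0 < c)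
    (p : EuclideanSpace ℝ (Fin n)) (r : ℝ)
    (φt ut : EuclideanSpace ℝ (Fin n) → ℝ)
    (hφt : ∀ y, φt y = c * (φ (A.symm (y - b)) - (⟪p, A.symm (y - b)⟫ + r)))
    (hut : ∀ y, ut y = u (A.symm (y - b)))
    (β : ℝ) (hβ : 0 < β) :
    Gset ((fun x => A x + b) '' Ω) φt ut β = (fun x => A x + b) '' Gset Ω φ u (β * c) := by

  have hTinv : ∀ x : EuclideanSpace ℝ (Fin n), A.symm (A x + b - b) = x := fun x => by simp
  have hsub : ∀ x x0 : EuclideanSpace ℝ (Fin n), A x + b - (A x0 + b) = A (x - x0) := by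
    intro x x0; rw [map_sub]; abel
  have hdsq : ∀ x0 ∈ Ω, ∀ x, dsq φt (A x + b) (A x0 + b) = c * dsq φ x x0 := by
    intro x0 hx0 x
    rw [dsq, dsq, inner_grad, inner_grad, hsub,
      aux_fderiv_φt A b p x0 r c φ φt hφt (hφd x0 hx0) (x - x0), hφt, hφt]
    simp only [hTinv]
    rw [map_sub (fderiv ℝ φ x0), inner_sub_right]
    ring
  have hut_eq : ∀ x0, DifferentiableAt ℝ u x0 → ∀ x,
      ut (A x + b) - ut (A x0 + b) - ⟪gradient ut (A x0 + b), A x + b - (A x0 + b)⟫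
        = u x - u x0 - ⟪gradient u x0, x - x0⟫ := by
    intro x0 hud x
    rw [inner_grad, inner_grad, hsub, aux_fderiv_ut A b x0 u ut hut hud, hut, hut]
    simp [hTinv]
  ext y
  simp only [Gset, Set.mem_setOf_eq, Set.mem_image]
  constructor
  · rintro ⟨⟨x0, hx0, rfl⟩, hdiff, hbound⟩
    have hud := (aux_diff_iff A b x0 u ut hut).1 hdiff
    refine ⟨x0, ⟨hx0, hud, fun x hx => ?_⟩, rfl⟩
    have h1 := hbound (A x + b) ⟨x, hx, rfl⟩
    rw [hut_eq x0 hud x, hdsq x0 hx0 x, ← mul_assoc] at h1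
    exact h1
  · rintro ⟨x0, ⟨hx0, hud, hbound⟩, rfl⟩
    refine ⟨⟨x0, hx0, rfl⟩, (aux_diff_iff A b x0 u ut hut).2 hud, ?_⟩
    rintro y ⟨x, hx, rfl⟩
    rw [hut_eq x0 hud x, hdsq x0 hx0 x, ← mul_assoc]
    exact hbound x hx
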